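/- The function x ↦ √x · Γ(x)/Γ(x + 1/2) is strictly decreasing on the interval (0, ∞). -/

import Mathlib

open Real Filter

namespace BustozIsmailAux

/-- Midpoint log-convexity of the Gamma function. -/
lemma gamma_midpoint (a b : ℝ) (ha : 0 < a) (hb : 0 < b) :
    Gamma ((a+b)/2) ^ 2 ≤ Gamma a * Gamma b := by
  have h := Real.convexOn_log_Gamma.2 (Set.mem_Ioi.2 ha) (Set.mem_Ioi.2 hb)
    (by norm_num : (0:ℝ) ≤ 1/2) (by norm_num : (0:ℝ) ≤ 1/2) (by norm_num)
  simp only [Function.comp, smul_eq_mul] at h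
  rw [show (1:ℝ)/2*a + 1/2*b = (a+b)/2 by ring] at h
  have h2 : 2 * Real.log (Gamma ((a+b)/2)) ≤ Real.log (Gamma a) + Real.log (Gamma b) := by
    linarith
  have := Real.exp_le_exp.2 h2
  rw [Real.exp_add, Real.exp_log (Real.Gamma_pos_of_pos ha),
    Real.exp_log (Real.Gamma_pos_of_pos hb), two_mul, Real.exp_add,
    Real.exp_log (Real.Gamma_pos_of_pos (by positivity : (0:ℝ) < (a+b)/2))] at this
  rw [sq]; exact this

noncomputable def f (x : ℝ) : ℝ := Real.sqrt x * Real.Gamma x / Real.Gamma (x + 1 / 2)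

noncomputable def r (x : ℝ) : ℝ := Real.sqrt (1 + 1 / (4 * x * (x + 1)))

lemma one_lt_r {x : ℝ} (hx : 0 < x) : 1 < r x := by
  rw [r, show (1:ℝ) < Real.sqrt (1 + 1 / (4*x*(x+1))) ↔ _ from Real.lt_sqrt (by norm_num)]
  have : 0 < 1 / (4 * x * (x+1)) := by positivity
  nlinarith

lemma r_anti {x y : ℝ} (hx : 0 < x) (hxy : x < y) : r y < r x := by
  have hy : 0 < y := hx.trans hxy
  apply Real.sqrt_lt_sqrt (by positivity)
  have h1 : 4 * x * (x+1) < 4 * y * (y+1) := by nlinarith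
  have h2 : 0 < 4 * x * (x+1) := by positivity
  have := one_div_lt_one_div_of_lt h2 h1
  linarith

lemma r_pos {x : ℝ} (hx : 0 < x) : 0 < r x := lt_trans one_pos (one_lt_r hx)

lemma f_pos {x : ℝ} (hx : 0 < x) : 0 < f x := by
  have h1 := Real.Gamma_pos_of_pos hx
  have h2 := Real.Gamma_pos_of_pos (by linarith : (0:ℝ) < x + 1/2)
  have h3 := Real.sqrt_pos.2 hx
  exact div_pos (mul_pos h3 h1) h2

/-- The key recurrence `f x = r x * f (x + 1)`. -/
lemma f_rec {x : ℝ} (hx : 0 < x) : f x = r x * f (x + 1) := by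
  have h2 : (0:ℝ) < x + 1/2 := by linarith
  have hG := Real.Gamma_pos_of_pos hx
  have hG2 := Real.Gamma_pos_of_pos h2
  have e1 : Real.Gamma (x + 1) = x * Real.Gamma x := Real.Gamma_add_one hx.ne'
  have e2 : Real.Gamma (x + 1 + 1/2) = (x + 1/2) * Real.Gamma (x + 1/2) := by
    rw [show x + 1 + 1/2 = (x + 1/2) + 1 by ring, Real.Gamma_add_one h2.ne']
  have hr : r x = (x + 1/2) / Real.sqrt (x * (x+1)) := by
    rw [r, show 1 + 1 / (4 * x * (x + 1)) = (x+1/2)^2 / (x*(x+1)) by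
        field_simp; ring,
      Real.sqrt_div (by positivity), Real.sqrt_sq h2.le]
  have hsq : Real.sqrt (x*(x+1)) = Real.sqrt x * Real.sqrt (x+1) :=
    Real.sqrt_mul hx.le _
  have hsx : (0:ℝ) < Real.sqrt x := Real.sqrt_pos.2 hx
  have hsx1 : (0:ℝ) < Real.sqrt (x+1) := Real.sqrt_pos.2 (by linarith)
  rw [f, f, hr, hsq, e1, e2]
  field_simp
  ring_nf
  rw [Real.sq_sqrt hx.le]

lemma one_le_f {x : ℝ} (hx : 0 < x) : 1 ≤ f x := by
  have hG := Real.Gamma_pos_of_pos hx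
  have h2 : (0:ℝ) < x + 1/2 := by linarith
  have hG2 := Real.Gamma_pos_of_pos h2
  have key := gamma_midpoint x (x+1) hx (by linarith)
  rw [show (x + (x+1))/2 = x + 1/2 by ring, Real.Gamma_add_one hx.ne'] at key
  have hle : Real.Gamma (x + 1/2) ≤ Real.sqrt x * Real.Gamma x := by
    have h1 : Real.Gamma (x+1/2) = Real.sqrt (Real.Gamma (x+1/2)^2) :=
      (Real.sqrt_sq hG2.le).symm
    have h2' : Real.sqrt (Real.Gamma x * (x * Real.Gamma x))
        = Real.sqrt x * Real.Gamma x := by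
      rw [show Real.Gamma x * (x * Real.Gamma x) = x * Real.Gamma x ^2 by ring,
        Real.sqrt_mul hx.le, Real.sqrt_sq hG.le]
    rw [h1, ← h2']
    exact Real.sqrt_le_sqrt key
  rw [f, le_div_iff₀ hG2, one_mul]
  exact hle

lemma f_le {x : ℝ} (hx : 1/2 < x) : f x ≤ Real.sqrt (x / (x - 1/2)) := by
  have hx0 : (0:ℝ) < x := by linarith
  have hm : (0:ℝ) < x - 1/2 := by linarith
  have hG := Real.Gamma_pos_of_pos hx0
  have hG2 := Real.Gamma_pos_of_pos (by linarith : (0:ℝ) < x + 1/2)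
  have hGm := Real.Gamma_pos_of_pos hm
  have key := gamma_midpoint (x - 1/2) (x + 1/2) hm (by linarith)
  rw [show (x - 1/2 + (x+1/2))/2 = x by ring,
    show x + 1/2 = (x - 1/2) + 1 by ring, Real.Gamma_add_one hm.ne'] at key
  have key2 : (x - 1/2) * Real.Gamma x ^ 2 ≤ ((x-1/2) * Real.Gamma (x-1/2))^2 := by
    nlinarith
  have hle : Real.sqrt (x - 1/2) * Real.Gamma x ≤ (x-1/2) * Real.Gamma (x-1/2) := by
    have h1 : Real.sqrt (x-1/2) * Real.Gamma x
        = Real.sqrt ((x-1/2) * Real.Gamma x ^2) := by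
      rw [Real.sqrt_mul hm.le, Real.sqrt_sq hG.le]
    rw [h1, ← Real.sqrt_sq (by positivity : (0:ℝ) ≤ (x-1/2) * Real.Gamma (x-1/2))]
    exact Real.sqrt_le_sqrt key2
  rw [f, show x + 1/2 = (x - 1/2) + 1 by ring, Real.Gamma_add_one hm.ne',
    Real.sqrt_div hx0.le, div_le_div_iff₀ (by positivity) (Real.sqrt_pos.2 hm)]
  calc Real.sqrt x * Real.Gamma x * Real.sqrt (x - 1/2)
      = Real.sqrt x * (Real.sqrt (x-1/2) * Real.Gamma x) := by ring
    _ ≤ Real.sqrt x * ((x-1/2) * Real.Gamma (x-1/2)) := by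
        apply mul_le_mul_of_nonneg_left hle (Real.sqrt_nonneg x)

/-- Squeeze: `f (x + n) → 1`. -/
lemma tendsto_f {x : ℝ} (hx : 0 < x) :
    Tendsto (fun n : ℕ => f (x + n)) atTop (nhds 1) := by
  have hden : Tendsto (fun n : ℕ => x + (n:ℝ) - 1/2) atTop atTop := by
    apply tendsto_atTop_add_const_right
    exact tendsto_atTop_add_const_left _ _ tendsto_natCast_atTop_atTop
  have hinv : Tendsto (fun n : ℕ => (1:ℝ)/2 / (x + n - 1/2)) atTop (nhds 0) := by
    simpa [div_eq_mul_inv] using hden.inv_tendsto_atTop.const_mul ((1:ℝ)/2)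
  have hq : Tendsto (fun n : ℕ => (x + n) / (x + n - 1/2)) atTop (nhds 1) := by
    have : ∀ᶠ n : ℕ in atTop, (x + n) / (x + n - 1/2) = 1 + (1:ℝ)/2 / (x + n - 1/2) := by
      filter_upwards [eventually_ge_atTop 1] with n hn
      have : (0:ℝ) < x + n - 1/2 := by
        have : (1:ℝ) ≤ n := by exact_mod_cast hn
        linarith
      rw [div_eq_iff (ne_of_gt this), add_mul, one_mul,
        div_mul_cancel₀ _ (ne_of_gt this)]
      ring
    rw [tendsto_congr' this]
    simpa using hinv.const_add 1
  have hu : Tendsto (fun n : ℕ => Real.sqrt ((x + n) / (x + n - 1/2))) atTop (nhds 1) := by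
    have := (Real.continuous_sqrt.tendsto 1).comp hq
    simpa [Function.comp_def] using this
  apply tendsto_of_tendsto_of_tendsto_of_le_of_le' tendsto_const_nhds hu
  · filter_upwards with n
    exact one_le_f (by positivity)
  · filter_upwards [eventually_ge_atTop 1] with n hn
    have h1 : (1:ℝ) ≤ n := by exact_mod_cast hn
    exact f_le (by linarith)

lemma f_prod {x : ℝ} (hx : 0 < x) (n : ℕ) :
    f x = (∏ k ∈ Finset.range n, r (x + k)) * f (x + n) := by
  induction n with
  | zero => simp
  | succ n ih =>
    rw [ih, Finset.prod_range_succ, f_rec (by positivity : (0:ℝ) < x + n)]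
    push_cast
    ring_nf

end BustozIsmailAux

open BustozIsmailAux in
/-- **Bustoz–Ismail.** The function `x ↦ √x · Γ(x)/Γ(x + 1/2)` is strictly
decreasing on `(0, ∞)`. -/
theorem sqrt_mul_gamma_div_gamma_strictAntiOn :
    StrictAntiOn (fun x : ℝ => Real.sqrt x * Real.Gamma x / Real.Gamma (x + 1 / 2))
      (Set.Ioi (0 : ℝ)) := by
  intro x hx y hy hxy
  rw [Set.mem_Ioi] at hx hy
  show f y < f x
  set c : ℝ := r x / r y with hc
  have hry := r_pos hy
  have hc1 : 1 < c := (one_lt_div hry).2 (r_anti hx hxy)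
  have key : ∀ n : ℕ, 1 ≤ n → c * (f y * f (x + n)) ≤ f x * f (y + n) := by
    intro n hn
    obtain ⟨m, rfl⟩ : ∃ m, n = m + 1 := ⟨n - 1, (Nat.succ_pred_eq_of_pos hn).symm⟩
    have hprod : c * ∏ k ∈ Finset.range (m+1), r (y + k)
        ≤ ∏ k ∈ Finset.range (m+1), r (x + k) := by
      rw [Finset.prod_range_succ', Finset.prod_range_succ']
      push_cast
      have h1 : ∏ k ∈ Finset.range m, r (y + (k + 1))
          ≤ ∏ k ∈ Finset.range m, r (x + (k + 1)) := by
        apply Finset.prod_le_prod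
        · intro k _; exact (r_pos (by positivity)).le
        · intro k _
          exact (r_anti (by positivity) (by linarith)).le
      have h2 : c * (r (y + 0)) = r (x + 0) := by
        simp only [add_zero]
        rw [hc, div_mul_cancel₀ _ hry.ne']
      calc c * ((∏ k ∈ Finset.range m, r (y + (k+1))) * r (y + 0))
          = (∏ k ∈ Finset.range m, r (y + (k+1))) * (c * r (y+0)) := by ring
        _ ≤ (∏ k ∈ Finset.range m, r (x + (k+1))) * (c * r (y+0)) := by
            apply mul_le_mul_of_nonneg_right h1
            have : 0 < r (y+0) := r_pos (by simpa using hy)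
            positivity
        _ = (∏ k ∈ Finset.range m, r (x + (k+1))) * r (x + 0) := by rw [h2]
    have hfx := f_pos (show (0:ℝ) < x + (m+1:ℕ) by positivity)
    have hfy := f_pos (show (0:ℝ) < y + (m+1:ℕ) by positivity)
    rw [f_prod hx (m+1), f_prod hy (m+1)]
    calc c * ((∏ k ∈ Finset.range (m+1), r (y + k)) * f (y + (m+1:ℕ)) * f (x + (m+1:ℕ)))
        = (c * ∏ k ∈ Finset.range (m+1), r (y + k)) * (f (y + (m+1:ℕ)) * f (x + (m+1:ℕ))) := by
          ring
      _ ≤ (∏ k ∈ Finset.range (m+1), r (x + k)) * (f (y + (m+1:ℕ)) * f (x + (m+1:ℕ))) := by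
          apply mul_le_mul_of_nonneg_right hprod; positivity
      _ = (∏ k ∈ Finset.range (m+1), r (x + k)) * f (x + (m+1:ℕ)) * f (y + (m+1:ℕ)) := by
          ring
  have lim1 : Tendsto (fun n : ℕ => f x * f (y + n)) atTop (nhds (f x)) := by
    simpa using (tendsto_f hy).const_mul (f x)
  have lim2 : Tendsto (fun n : ℕ => c * (f y * f (x + n))) atTop (nhds (c * f y)) := by
    simpa using ((tendsto_f hx).const_mul (f y)).const_mul c
  have hle : c * f y ≤ f x := by
    refine le_of_tendsto_of_tendsto lim2 lim1 ?_
    filter_upwards [eventually_ge_atTop 1] with n hn using key n hn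
  have hfy := f_pos hy
  nlinarith
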